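/- Define the rank generating functions R_n(x) of the matchable Lucas cubes by R_{2m}(x) = A_m(x) and R_{2m+1}(x) = B_m(x). Then in the ring of formal power series in y with coefficients in ℤ[x]: (1 − (1+x+x²)y² + x²y⁴) · ( ∑_{n≥0} R_n(x) y^n − x y ) = 1 + y + x³y³ − x y⁴. -/

import Mathlib

open Polynomial

/-- The rank generating function polynomials `A m` of the matchable Lucas cubes `Ω_{2m}`. -/
noncomputable def A : ℕ → Polynomial ℤ
  | 0 => 1
  | 1 => 1 + X + X ^ 2
  | 2 => 1 + X + 2 * X ^ 2 + 2 * X ^ 3 + X ^ 4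
  | (m + 3) => (1 + X + X ^ 2) * A (m + 2) - X ^ 2 * A (m + 1)

/-- The rank generating function polynomials `B m` of the matchable Lucas cubes `Ω_{2m+1}`. -/
noncomputable def B : ℕ → Polynomial ℤ
  | 0 => 1 + X
  | 1 => 1 + X + X ^ 2 + X ^ 3
  | 2 => 1 + 2 * X + 2 * X ^ 2 + 3 * X ^ 3 + 2 * X ^ 4 + X ^ 5
  | (m + 3) => (1 + X + X ^ 2) * B (m + 2) - X ^ 2 * B (m + 1)

/-- The rank generating function `R n` of the matchable Lucas cube `Ω_n`:
`R (2m) = A m` and `R (2m+1) = B m`. -/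
noncomputable def R (n : ℕ) : Polynomial ℤ := if n % 2 = 0 then A (n / 2) else B (n / 2)

theorem generating_function_of_R :
    (1 - PowerSeries.C (R := Polynomial ℤ) (1 + X + X ^ 2) * PowerSeries.X ^ 2
        + PowerSeries.C (R := Polynomial ℤ) (X ^ 2) * PowerSeries.X ^ 4)
        * (PowerSeries.mk R - PowerSeries.C (R := Polynomial ℤ) X * PowerSeries.X)
      = 1 + PowerSeries.X + PowerSeries.C (R := Polynomial ℤ) (X ^ 3) * PowerSeries.X ^ 3
          - PowerSeries.C (R := Polynomial ℤ) X * PowerSeries.X ^ 4 := by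
  have key : ∀ (a : Polynomial ℤ) (k n : ℕ) (f : PowerSeries (Polynomial ℤ)),
      PowerSeries.coeff n (PowerSeries.C a * PowerSeries.X ^ k * f)
        = if k ≤ n then a * PowerSeries.coeff (n - k) f else 0 := by
    intro a k n f
    rw [mul_assoc, PowerSeries.coeff_C_mul, PowerSeries.coeff_X_pow_mul']
    split_ifs <;> simp
  have key2 : ∀ (a : Polynomial ℤ) (k n : ℕ),
      PowerSeries.coeff n (PowerSeries.C a * PowerSeries.X ^ k)
        = if n = k then a else 0 := by
    intro a k n
    rw [PowerSeries.coeff_C_mul, PowerSeries.coeff_X_pow]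
    split_ifs <;> simp
  set p : Polynomial ℤ := 1 + X + X ^ 2 with hp
  refine PowerSeries.ext fun n => ?_
  rw [add_mul, sub_mul, one_mul]
  simp only [map_add, map_sub, key, key2, PowerSeries.coeff_mk, PowerSeries.coeff_one,
    PowerSeries.coeff_X, PowerSeries.coeff_C_mul, mul_ite, mul_zero, mul_one, mul_sub]
  match n with
  | 0 => norm_num [R, A]
  | 1 => norm_num [R, B, hp]
  | 2 => norm_num [R, A, hp] <;> ring
  | 3 => norm_num [R, B, A, hp] <;> ring
  | 4 => norm_num [R, A, hp] <;> ring
  | 5 => norm_num [R, B, hp] <;> ring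
  | (n + 6) =>
    simp only [show 2 ≤ n + 6 from by omega, show 4 ≤ n + 6 from by omega,
      show ¬(n + 6 = 0) from by omega, show ¬(n + 6 = 1) from by omega,
      show ¬(n + 6 = 3) from by omega, show ¬(n + 6 = 4) from by omega,
      show n + 6 - 2 = n + 4 from by omega, show n + 6 - 4 = n + 2 from by omega,
      show ¬(n + 4 = 1) from by omega, show ¬(n + 2 = 1) from by omega,
      if_true, if_false, ite_true, ite_false, R]
    rcases Nat.even_or_odd n with ⟨k, hk⟩ | ⟨k, hk⟩
    · subst hk
      simp only [show (k + k + 6) % 2 = 0 from by omega, show (k + k + 4) % 2 = 0 from by omega,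
        show (k + k + 2) % 2 = 0 from by omega, show (k + k + 6) / 2 = k + 3 from by omega,
        show (k + k + 4) / 2 = k + 2 from by omega, show (k + k + 2) / 2 = k + 1 from by omega,
        if_true, ite_true, A, hp]
      ring
    · subst hk
      simp only [show ¬((2 * k + 1 + 6) % 2 = 0) from by omega,
        show ¬((2 * k + 1 + 4) % 2 = 0) from by omega,
        show ¬((2 * k + 1 + 2) % 2 = 0) from by omega,
        show (2 * k + 1 + 6) / 2 = k + 3 from by omega,
        show (2 * k + 1 + 4) / 2 = k + 2 from by omega,
        show (2 * k + 1 + 2) / 2 = k + 1 from by omega,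
        if_false, ite_false, B, hp]
      ring
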